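/- Let n be a natural number and let M be a symmetric negative definite n×n rational matrix. Then for every vector L ∈ ℚⁿ there exists a unique pair (P, N) of vectors in ℚⁿ such that L = P + N, P is nef with respect to M, N is effective, and P·N = 0 (Zariski decomposition). -/

import Mathlib

open Matrix

/-! ### Auxiliary lemmas for the Zariski decomposition -/

lemma zar_dot_symm {n : ℕ} {R : Type*} [CommRing R] {M : Matrix (Fin n) (Fin n) R}
    (hsym : M.IsSymm) (x y : Fin n → R) :
    x ⬝ᵥ M.mulVec y = y ⬝ᵥ M.mulVec x := by
  rw [Matrix.dotProduct_mulVec, ← Matrix.mulVec_transpose, hsym.eq, dotProduct_comm]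

lemma zar_expand {n : ℕ} {R : Type*} [CommRing R] {M : Matrix (Fin n) (Fin n) R}
    (hsym : M.IsSymm) (x y : Fin n → R) :
    (x + y) ⬝ᵥ M.mulVec (x + y)
      = x ⬝ᵥ M.mulVec x + 2 * (y ⬝ᵥ M.mulVec x) + y ⬝ᵥ M.mulVec y := by
  simp only [Matrix.mulVec_add, add_dotProduct, dotProduct_add]
  rw [zar_dot_symm hsym x y]
  ring

lemma zar_cont {n : ℕ} (B : Matrix (Fin n) (Fin n) ℝ) :
    Continuous fun x : Fin n → ℝ => x ⬝ᵥ B.mulVec x := by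
  simp only [dotProduct, Matrix.mulVec]
  fun_prop

lemma zar_sum_support {n : ℕ} {R : Type*} [AddCommMonoid R] (p : Fin n → Prop) [DecidablePred p]
    (f : Fin n → R) (hf : ∀ i, ¬ p i → f i = 0) :
    (∑ a : {i // p i}, f a.1) = ∑ i, f i := by
  rw [← Finset.sum_subtype (Finset.univ.filter p) (by simp) f]
  exact Finset.sum_filter_of_ne (fun i _ hfi => by
    by_contra hp; exact hfi (hf i hp))

lemma zar_cast_mulVec {n : ℕ} (M : Matrix (Fin n) (Fin n) ℚ) (v : Fin n → ℚ) (i : Fin n) :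
    (M.map ((↑) : ℚ → ℝ)).mulVec (fun j => (v j : ℝ)) i = ((M.mulVec v i : ℚ) : ℝ) :=
  (RingHom.map_mulVec (Rat.castHom ℝ) M v i).symm

lemma zar_cast_dot {n : ℕ} (v w : Fin n → ℚ) :
    (fun j => (v j : ℝ)) ⬝ᵥ (fun j => (w j : ℝ)) = ((v ⬝ᵥ w : ℚ) : ℝ) :=
  (RingHom.map_dotProduct (Rat.castHom ℝ) v w).symm

/-- Existence of a minimizer of the quadratic distance to `l` over the nonnegative
orthant, for a positive definite symmetric real matrix `B`, together with the
KKT conditions. -/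
lemma zar_real_exists {n : ℕ} {B : Matrix (Fin n) (Fin n) ℝ} (hsym : B.IsSymm)
    (hpos : ∀ x : Fin n → ℝ, x ≠ 0 → 0 < x ⬝ᵥ B.mulVec x) (l : Fin n → ℝ) :
    ∃ N : Fin n → ℝ, (∀ i, 0 ≤ N i) ∧ (∀ i, B.mulVec (l - N) i ≤ 0) ∧
      (∀ i, 0 < N i → B.mulVec (l - N) i = 0) := by
  rcases Nat.eq_zero_or_pos n with rfl | hn
  · exact ⟨0, fun i => i.elim0, fun i => i.elim0, fun i => i.elim0⟩
  haveI : Nonempty (Fin n) := ⟨⟨0, hn⟩⟩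
  set f : (Fin n → ℝ) → ℝ := fun x => (l - x) ⬝ᵥ B.mulVec (l - x) with hf
  have cont_f : Continuous f := (zar_cont B).comp (continuous_const.sub continuous_id)
  obtain ⟨u, hu_mem, hu_min⟩ := (isCompact_sphere (0 : Fin n → ℝ) 1).exists_isMinOn
    (NormedSpace.sphere_nonempty.mpr zero_le_one) (zar_cont B).continuousOn
  have hu_norm : ‖u‖ = 1 := by simpa using hu_mem
  have hu_ne : u ≠ 0 := by intro h; rw [h] at hu_norm; simp at hu_norm
  set c : ℝ := u ⬝ᵥ B.mulVec u with hc_def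
  have hc : 0 < c := hpos u hu_ne
  have hcoer : ∀ x : Fin n → ℝ, c * ‖x‖ ^ 2 ≤ x ⬝ᵥ B.mulVec x := by
    intro x
    by_cases hx : x = 0
    · simp [hx]
    · have hr : 0 < ‖x‖ := norm_pos_iff.mpr hx
      have scal : ∀ (a : ℝ) (v : Fin n → ℝ),
          (a • v) ⬝ᵥ B.mulVec (a • v) = a ^ 2 * (v ⬝ᵥ B.mulVec v) := by
        intro a v
        rw [Matrix.mulVec_smul, smul_dotProduct, dotProduct_smul,
          smul_eq_mul, smul_eq_mul]
        ring
      have hu'_mem : ‖x‖⁻¹ • x ∈ Metric.sphere (0 : Fin n → ℝ) 1 := by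
        simp [norm_smul, abs_of_pos (inv_pos.mpr hr), inv_mul_cancel₀ hr.ne']
      have hxu : x = ‖x‖ • (‖x‖⁻¹ • x) := by
        rw [smul_smul, mul_inv_cancel₀ hr.ne', one_smul]
      have hval : x ⬝ᵥ B.mulVec x = ‖x‖ ^ 2 * ((‖x‖⁻¹ • x) ⬝ᵥ B.mulVec (‖x‖⁻¹ • x)) := by
        conv_lhs => rw [hxu]
        rw [scal]
      set u' : Fin n → ℝ := ‖x‖⁻¹ • x
      have hge : c ≤ u' ⬝ᵥ B.mulVec u' := hu_min hu'_mem
      calc c * ‖x‖ ^ 2 ≤ (u' ⬝ᵥ B.mulVec u') * ‖x‖ ^ 2 := by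
            exact mul_le_mul_of_nonneg_right hge (by positivity)
        _ = x ⬝ᵥ B.mulVec x := by rw [hval]; ring
  set K : Set (Fin n → ℝ) := {x | ∀ i, 0 ≤ x i} with hK
  have hK_closed : IsClosed K := by
    have : K = ⋂ i, {x : Fin n → ℝ | 0 ≤ x i} := by ext x; simp [hK, Set.mem_iInter]
    rw [this]
    exact isClosed_iInter fun i => isClosed_le continuous_const (continuous_apply i)
  set K' : Set (Fin n → ℝ) := K ∩ {x | f x ≤ f 0} with hK'
  have hK'_closed : IsClosed K' := hK_closed.inter (isClosed_le cont_f continuous_const)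
  have hK'_sub : K' ⊆ Metric.closedBall 0 (‖l‖ + Real.sqrt (f 0 / c)) := by
    intro x hx
    have h1 : c * ‖l - x‖ ^ 2 ≤ f 0 := le_trans (hcoer (l - x)) hx.2
    have h2 : ‖l - x‖ ^ 2 ≤ f 0 / c := (le_div_iff₀' hc).mpr h1
    have h3 : ‖l - x‖ ≤ Real.sqrt (f 0 / c) := by
      rw [← Real.sqrt_sq (norm_nonneg (l - x))]
      exact Real.sqrt_le_sqrt h2
    have h4 : ‖x‖ ≤ ‖l‖ + ‖l - x‖ := by
      calc ‖x‖ = ‖l - (l - x)‖ := by congr 1; abel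
        _ ≤ ‖l‖ + ‖l - x‖ := norm_sub_le _ _
    rw [Metric.mem_closedBall, dist_zero_right]
    linarith
  have hK'_cpt : IsCompact K' :=
    Metric.isCompact_of_isClosed_isBounded hK'_closed
      (Metric.isBounded_closedBall.subset hK'_sub)
  have h0K : (0 : Fin n → ℝ) ∈ K' := by
    refine ⟨fun i => le_rfl, ?_⟩
    show f 0 ≤ f 0
    exact le_rfl
  obtain ⟨N, hNK', hNmin⟩ := hK'_cpt.exists_isMinOn ⟨0, h0K⟩ cont_f.continuousOn
  have hNmin' : ∀ y ∈ K, f N ≤ f y := by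
    intro y hy
    by_cases hyf : f y ≤ f 0
    · exact hNmin ⟨hy, hyf⟩
    · exact le_trans (hNmin h0K) (le_of_not_ge hyf)
  have hNnn : ∀ i, 0 ≤ N i := hNK'.1
  have memK : ∀ (i : Fin n) (t : ℝ), 0 ≤ N i + t → N + t • (Pi.single i 1 : Fin n → ℝ) ∈ K := by
    intro i t ht j
    by_cases h : j = i
    · subst h; simpa using ht
    · simp [Pi.single_apply, h, hNnn j]
  have key : ∀ (i : Fin n) (t : ℝ),
      f (N + t • (Pi.single i 1 : Fin n → ℝ))
        = f N + t * (t * B i i - 2 * B.mulVec (l - N) i) := by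
    intro i t
    have hsub : l - (N + t • (Pi.single i 1 : Fin n → ℝ))
        = (l - N) + (-t) • (Pi.single i 1 : Fin n → ℝ) := by
      funext j; simp; ring
    rw [hf]
    simp only [hsub]
    rw [zar_expand hsym (l - N) ((-t) • (Pi.single i 1 : Fin n → ℝ))]
    rw [smul_dotProduct, single_dotProduct, Matrix.mulVec_smul,
      dotProduct_smul]
    simp [single_dotProduct, smul_eq_mul]
    ring
  have hBii : ∀ i : Fin n, 0 < B i i := by
    intro i
    have hsne : (Pi.single i 1 : Fin n → ℝ) ≠ 0 := by
      intro h; have := congrFun h i; simp at this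
    have := hpos _ hsne
    simpa [single_dotProduct] using this
  have hnef : ∀ i, B.mulVec (l - N) i ≤ 0 := by
    intro i
    by_contra hq
    push_neg at hq
    set q := B.mulVec (l - N) i with hq_def
    set t : ℝ := q / B i i with ht_def
    have htpos : 0 < t := div_pos hq (hBii i)
    have hmem : N + t • (Pi.single i 1 : Fin n → ℝ) ∈ K :=
      memK i t (by have := hNnn i; linarith)
    have hfle := hNmin' _ hmem
    rw [key i t] at hfle
    have htB : t * B i i = q := div_mul_cancel₀ q (hBii i).ne'
    nlinarith
  refine ⟨N, hNnn, hnef, ?_⟩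
  intro i hNi
  refine le_antisymm (hnef i) ?_
  by_contra hq
  push_neg at hq
  set q := B.mulVec (l - N) i with hq_def
  set t : ℝ := max (-(N i)/2) (q / B i i) with ht_def
  have htneg : t < 0 := by
    apply max_lt
    · linarith
    · exact div_neg_of_neg_of_pos hq (hBii i)
  have htN : 0 ≤ N i + t := by
    have : -(N i)/2 ≤ t := le_max_left _ _
    linarith
  have htB : q ≤ t * B i i := by
    have h1 : q / B i i ≤ t := le_max_right _ _
    calc q = (q / B i i) * B i i := (div_mul_cancel₀ q (hBii i).ne').symm
      _ ≤ t * B i i := mul_le_mul_of_nonneg_right h1 (hBii i).le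
  have hmem : N + t • (Pi.single i 1 : Fin n → ℝ) ∈ K := memK i t htN
  have hfle := hNmin' _ hmem
  rw [key i t] at hfle
  nlinarith

/-- A rational matrix that is negative definite on rational vectors is negative
definite on real vectors. -/
lemma zar_negdef_real {n : ℕ} {M : Matrix (Fin n) (Fin n) ℚ} (hsym : M.IsSymm)
    (hneg : ∀ x : Fin n → ℚ, x ≠ 0 → x ⬝ᵥ M.mulVec x < 0) :
    ∀ x : Fin n → ℝ, x ≠ 0 → x ⬝ᵥ (M.map ((↑) : ℚ → ℝ)).mulVec x < 0 := by
  classical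
  set A := M.map ((↑) : ℚ → ℝ) with hA
  have hA_symm : A.IsSymm := by
    rw [Matrix.IsSymm, hA, ← Matrix.transpose_map, hsym.eq]
  have hsemi : ∀ x : Fin n → ℝ, x ⬝ᵥ A.mulVec x ≤ 0 := by
    have hclosed : IsClosed {x : Fin n → ℝ | x ⬝ᵥ A.mulVec x ≤ 0} :=
      isClosed_le (zar_cont A) continuous_const
    have hdense : Dense (Set.pi Set.univ fun _ : Fin n => Set.range ((↑) : ℚ → ℝ)) :=
      dense_pi Set.univ fun i _ => Rat.denseRange_cast
    have hsub : (Set.pi Set.univ fun _ : Fin n => Set.range ((↑) : ℚ → ℝ)) ⊆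
        {x : Fin n → ℝ | x ⬝ᵥ A.mulVec x ≤ 0} := by
      intro x hx
      choose q hq using fun i => hx i (Set.mem_univ i)
      have hxq : x = fun i => ((q i : ℝ)) := by funext i; exact (hq i).symm
      have hcast : x ⬝ᵥ A.mulVec x = ((q ⬝ᵥ M.mulVec q : ℚ) : ℝ) := by
        rw [hxq]
        have : A.mulVec (fun j => ((q j : ℝ))) = fun i => ((M.mulVec q i : ℚ) : ℝ) := by
          funext i; exact zar_cast_mulVec M q i
        rw [this, zar_cast_dot]
      rw [Set.mem_setOf_eq, hcast]
      rcases eq_or_ne q 0 with rfl | hq0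
      · simp
      · exact_mod_cast (hneg q hq0).le
    intro x
    have hx : x ∈ closure (Set.pi Set.univ fun _ : Fin n => Set.range ((↑) : ℚ → ℝ)) :=
      hdense x
    have := closure_mono hsub hx
    rwa [hclosed.closure_eq] at this
  have hdetM : M.det ≠ 0 := by
    intro h0
    obtain ⟨v, hv0, hv⟩ := (Matrix.exists_mulVec_eq_zero_iff).mpr h0
    have := hneg v hv0
    rw [hv] at this
    simp at this
  have hdetA : A.det ≠ 0 := by
    rw [hA]
    have : (M.map ((↑) : ℚ → ℝ)).det = ((M.det : ℚ) : ℝ) :=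
      (RingHom.map_det (Rat.castHom ℝ) M).symm
    rw [this]
    exact_mod_cast hdetM
  intro x hx
  rcases lt_or_eq_of_le (hsemi x) with h | h
  · exact h
  exfalso
  have h := h.symm
  have hAx : A.mulVec x = 0 := by
    funext i
    have hee : (Pi.single i 1 : Fin n → ℝ) ⬝ᵥ A.mulVec (Pi.single i 1 : Fin n → ℝ) = A i i := by
      simp [single_dotProduct]
    have hAii : A i i ≤ 0 := by rw [← hee]; exact hsemi _
    have hkey : ∀ t : ℝ, 2 * (t * A.mulVec x i) + t ^ 2 * A i i ≤ 0 := by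
      intro t
      have hth := hsemi (x + t • (Pi.single i 1 : Fin n → ℝ))
      rw [zar_expand hA_symm x (t • (Pi.single i 1 : Fin n → ℝ))] at hth
      have e1 : (t • (Pi.single i 1 : Fin n → ℝ)) ⬝ᵥ A.mulVec x = t * A.mulVec x i := by
        rw [smul_dotProduct, single_dotProduct]
        simp [smul_eq_mul]
      have e2 : (t • (Pi.single i 1 : Fin n → ℝ)) ⬝ᵥ
          A.mulVec (t • (Pi.single i 1 : Fin n → ℝ)) = t ^ 2 * A i i := by
        rw [Matrix.mulVec_smul, smul_dotProduct, dotProduct_smul]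
        simp only [smul_eq_mul, single_dotProduct, Matrix.mulVec_single_one, Matrix.col_apply]
        ring
      rw [e1, e2, h] at hth
      linarith
    show A.mulVec x i = (0 : ℝ)
    by_contra hne
    have hq2 : 0 < (A.mulVec x i) ^ 2 :=
      lt_of_le_of_ne (sq_nonneg _) (Ne.symm (pow_ne_zero 2 hne))
    rcases lt_or_eq_of_le hAii with hAii' | hAii'
    · have h1 := hkey (-(A.mulVec x i) / A i i)
      have hval : 2 * (-(A.mulVec x i) / A i i * A.mulVec x i)
            + (-(A.mulVec x i) / A i i) ^ 2 * A i i
          = -((A.mulVec x i) ^ 2 / A i i) := by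
        rw [div_pow, neg_pow]
        field_simp [hAii'.ne]
        ring
      rw [hval] at h1
      have h2 : (A.mulVec x i) ^ 2 / A i i < 0 := div_neg_of_pos_of_neg hq2 hAii'
      linarith
    · have h1 := hkey (A.mulVec x i)
      rw [← hAii'] at h1
      nlinarith [h1, hq2]
  exact hdetA ((Matrix.exists_mulVec_eq_zero_iff).mp ⟨x, hx, hAx⟩)

/-- **Zariski decomposition.** For a symmetric negative definite `n × n` rational
matrix `M`, every vector `L ∈ ℚⁿ` has a unique decomposition `L = P + N` where
`P` is nef (`(M P)ᵢ ≥ 0` for all `i`), `N` is effective (all coordinates `≥ 0`),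
and `P · N = Pᵀ M N = 0`. -/
theorem zariski_decomposition_exists_unique
    (n : ℕ) (M : Matrix (Fin n) (Fin n) ℚ)
    (hsym : M.IsSymm)
    (hneg : ∀ x : Fin n → ℚ, x ≠ 0 → x ⬝ᵥ M.mulVec x < 0)
    (L : Fin n → ℚ) :
    ∃! PN : (Fin n → ℚ) × (Fin n → ℚ),
      L = PN.1 + PN.2 ∧
      (∀ i, 0 ≤ M.mulVec PN.1 i) ∧
      (∀ i, 0 ≤ PN.2 i) ∧
      PN.1 ⬝ᵥ M.mulVec PN.2 = 0 := by
  classical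
  -- uniqueness
  have huniq : ∀ P₁ N₁ P₂ N₂ : Fin n → ℚ,
      L = P₁ + N₁ → (∀ i, 0 ≤ M.mulVec P₁ i) → (∀ i, 0 ≤ N₁ i) → P₁ ⬝ᵥ M.mulVec N₁ = 0 →
      L = P₂ + N₂ → (∀ i, 0 ≤ M.mulVec P₂ i) → (∀ i, 0 ≤ N₂ i) → P₂ ⬝ᵥ M.mulVec N₂ = 0 →
      N₁ = N₂ := by
    intro P₁ N₁ P₂ N₂ hL1 hnef1 hN1 ho1 hL2 hnef2 hN2 ho2
    by_contra hne
    have hD : N₁ - N₂ ≠ 0 := sub_ne_zero.mpr hne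
    have hlt := hneg _ hD
    have h12 : P₁ + N₁ = P₂ + N₂ := by rw [← hL1, ← hL2]
    have hPD : N₁ - N₂ = P₂ - P₁ := by
      rw [sub_eq_sub_iff_add_eq_add, add_comm N₁ P₁]
      exact h12
    have hcross1 : 0 ≤ N₁ ⬝ᵥ M.mulVec P₂ :=
      Finset.sum_nonneg fun i _ => mul_nonneg (hN1 i) (hnef2 i)
    have hcross2 : 0 ≤ N₂ ⬝ᵥ M.mulVec P₁ :=
      Finset.sum_nonneg fun i _ => mul_nonneg (hN2 i) (hnef1 i)
    have hz1 : N₁ ⬝ᵥ M.mulVec P₁ = 0 := by rw [zar_dot_symm hsym]; exact ho1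
    have hz2 : N₂ ⬝ᵥ M.mulVec P₂ = 0 := by rw [zar_dot_symm hsym]; exact ho2
    have hval : (N₁ - N₂) ⬝ᵥ M.mulVec (N₁ - N₂)
        = N₁ ⬝ᵥ M.mulVec P₂ + N₂ ⬝ᵥ M.mulVec P₁ := by
      conv_lhs => rw [show M.mulVec (N₁ - N₂) = M.mulVec (P₂ - P₁) by rw [← hPD]]
      rw [Matrix.mulVec_sub]
      simp only [sub_dotProduct, dotProduct_sub]
      rw [hz1, hz2]
      ring
    linarith
  -- existence: real solution
  have hAdef := zar_negdef_real hsym hneg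
  have hA_symm : (M.map ((↑) : ℚ → ℝ)).IsSymm := by
    rw [Matrix.IsSymm, ← Matrix.transpose_map, hsym.eq]
  have hB_symm : (-(M.map ((↑) : ℚ → ℝ))).IsSymm := by
    rw [Matrix.IsSymm, Matrix.transpose_neg, hA_symm.eq]
  have hBpos : ∀ x : Fin n → ℝ, x ≠ 0 → 0 < x ⬝ᵥ (-(M.map ((↑) : ℚ → ℝ))).mulVec x := by
    intro x hx
    rw [Matrix.neg_mulVec, dotProduct_neg]
    linarith [hAdef x hx]
  obtain ⟨N, hNnn, hnefR, hcompl⟩ := zar_real_exists hB_symm hBpos (fun i => (L i : ℝ))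
  set l : Fin n → ℝ := fun i => (L i : ℝ) with hl
  have hnefA : ∀ i, 0 ≤ (M.map ((↑) : ℚ → ℝ)).mulVec (l - N) i := by
    intro i
    have := hnefR i
    rw [Matrix.neg_mulVec] at this
    simpa using this
  have hcomplA : ∀ i, N i ≠ 0 → (M.map ((↑) : ℚ → ℝ)).mulVec (l - N) i = 0 := by
    intro i hi
    have h0 := hcompl i (lt_of_le_of_ne (hNnn i) (Ne.symm hi))
    rw [Matrix.neg_mulVec] at h0
    simpa [neg_eq_zero] using h0
  -- rational solution supported on the support of N
  set p : Fin n → Prop := fun i => N i ≠ 0 with hp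
  set M' : Matrix {i // p i} {i // p i} ℚ := M.submatrix Subtype.val Subtype.val with hM'
  have hM'det : M'.det ≠ 0 := by
    intro h0
    obtain ⟨v, hv0, hv⟩ := (Matrix.exists_mulVec_eq_zero_iff).mpr h0
    set w : Fin n → ℚ := fun i => if h : p i then v ⟨i, h⟩ else 0 with hw
    have hw_supp : ∀ i, ¬ p i → w i = 0 := fun i hi => dif_neg hi
    have hw_sub : ∀ a : {i // p i}, w a.1 = v a := fun a => dif_pos a.2
    have hw0 : w ≠ 0 := by
      obtain ⟨a, ha⟩ := Function.ne_iff.mp hv0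
      intro hzero
      apply ha
      have := congrFun hzero a.1
      rwa [hw_sub a] at this
    have hMw : ∀ a : {i // p i}, M.mulVec w a.1 = M'.mulVec v a := by
      intro a
      show (fun j => M a.1 j) ⬝ᵥ w = M'.mulVec v a
      have h1 : (fun j => M a.1 j) ⬝ᵥ w = ∑ j, M a.1 j * w j := rfl
      rw [h1, ← zar_sum_support p (fun j => M a.1 j * w j)
        (fun j hj => by show M a.1 j * w j = 0; rw [hw_supp j hj, mul_zero])]
      exact Finset.sum_congr rfl fun b _ => by rw [hw_sub b]; rfl
    have hzero : w ⬝ᵥ M.mulVec w = 0 := by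
      show (∑ i, w i * M.mulVec w i) = 0
      rw [← zar_sum_support p (fun i => w i * M.mulVec w i)
        (fun i hi => by show w i * M.mulVec w i = 0; rw [hw_supp i hi, zero_mul])]
      refine Finset.sum_eq_zero fun a _ => ?_
      rw [hMw a, hv]
      simp
    exact absurd hzero (hneg w hw0).ne
  set cvec : {i // p i} → ℚ := fun a => M.mulVec L a.1 with hcvec
  set y : {i // p i} → ℚ := M'⁻¹.mulVec cvec with hy
  have hy_eq : M'.mulVec y = cvec := by
    rw [hy, Matrix.mulVec_mulVec, Matrix.mul_nonsing_inv M' (isUnit_iff_ne_zero.mpr hM'det),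
      Matrix.one_mulVec]
  set Nq : Fin n → ℚ := fun i => if h : p i then y ⟨i, h⟩ else 0 with hNq
  have hNq_supp : ∀ i, ¬ p i → Nq i = 0 := fun i hi => dif_neg hi
  have hNq_sub : ∀ a : {i // p i}, Nq a.1 = y a := fun a => dif_pos a.2
  have hMNq : ∀ a : {i // p i}, M.mulVec Nq a.1 = M.mulVec L a.1 := by
    intro a
    have h1 : M.mulVec Nq a.1 = ∑ j, M a.1 j * Nq j := rfl
    rw [h1, ← zar_sum_support p (fun j => M a.1 j * Nq j)
      (fun j hj => by show M a.1 j * Nq j = 0; rw [hNq_supp j hj, mul_zero])]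
    have h2 : (∑ b : {i // p i}, M a.1 b.1 * Nq b.1) = M'.mulVec y a := by
      exact Finset.sum_congr rfl fun b _ => by rw [hNq_sub b]; rfl
    rw [h2, hy_eq]
  -- the cast of Nq equals N
  have hNc_eq : (fun i => ((Nq i : ℝ))) = N := by
    by_contra hne
    have hD : (fun i => ((Nq i : ℝ))) - N ≠ 0 := sub_ne_zero.mpr hne
    have hlt := hAdef _ hD
    have hsupp : ∀ i, ¬ p i → ((fun i => ((Nq i : ℝ))) - N) i = 0 := by
      intro i hi
      have hNi : N i = 0 := not_not.mp hi
      simp [hNq_supp i hi, hNi]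
    have hAeq : ∀ a : {i // p i},
        (M.map ((↑) : ℚ → ℝ)).mulVec ((fun i => ((Nq i : ℝ))) - N) a.1 = 0 := by
      intro a
      rw [Matrix.mulVec_sub]
      have h1 : (M.map ((↑) : ℚ → ℝ)).mulVec (fun i => ((Nq i : ℝ))) a.1
          = ((M.mulVec Nq a.1 : ℚ) : ℝ) := zar_cast_mulVec M Nq a.1
      have h2 : (M.map ((↑) : ℚ → ℝ)).mulVec l a.1 = ((M.mulVec L a.1 : ℚ) : ℝ) :=
        zar_cast_mulVec M L a.1
      have h3 : (M.map ((↑) : ℚ → ℝ)).mulVec N a.1 = (M.map ((↑) : ℚ → ℝ)).mulVec l a.1 := by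
        have h4 := hcomplA a.1 a.2
        rw [Matrix.mulVec_sub] at h4
        have h5 : (M.map ((↑) : ℚ → ℝ)).mulVec l a.1
            - (M.map ((↑) : ℚ → ℝ)).mulVec N a.1 = 0 := h4
        linarith
      have h6 : ((M.map ((↑) : ℚ → ℝ)).mulVec (fun i => ((Nq i : ℝ)))
          - (M.map ((↑) : ℚ → ℝ)).mulVec N) a.1
          = (M.map ((↑) : ℚ → ℝ)).mulVec (fun i => ((Nq i : ℝ))) a.1
            - (M.map ((↑) : ℚ → ℝ)).mulVec N a.1 := rfl
      rw [h6, h1, hMNq a, h3, h2]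
      ring
    have hzero : ((fun i => ((Nq i : ℝ))) - N) ⬝ᵥ
        (M.map ((↑) : ℚ → ℝ)).mulVec ((fun i => ((Nq i : ℝ))) - N) = 0 := by
      show (∑ i, ((fun i => ((Nq i : ℝ))) - N) i *
        (M.map ((↑) : ℚ → ℝ)).mulVec ((fun i => ((Nq i : ℝ))) - N) i) = 0
      rw [← zar_sum_support p
        (fun i => ((fun i => ((Nq i : ℝ))) - N) i *
          (M.map ((↑) : ℚ → ℝ)).mulVec ((fun i => ((Nq i : ℝ))) - N) i)
        (fun i hi => by
          show ((fun i => ((Nq i : ℝ))) - N) i *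
            (M.map ((↑) : ℚ → ℝ)).mulVec ((fun i => ((Nq i : ℝ))) - N) i = 0
          rw [hsupp i hi, zero_mul])]
      exact Finset.sum_eq_zero fun a _ => by rw [hAeq a, mul_zero]
    rw [hzero] at hlt
    exact lt_irrefl 0 hlt
  -- verify the rational conditions
  have hNq_nn : ∀ i, 0 ≤ Nq i := by
    intro i
    have : ((Nq i : ℝ)) = N i := congrFun hNc_eq i
    have := this ▸ hNnn i
    exact_mod_cast this
  have hcast_sub : (fun i => (((L - Nq) i : ℚ) : ℝ)) = l - N := by
    rw [← hNc_eq]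
    funext i
    simp only [Pi.sub_apply, hl]
    push_cast
    rfl
  have hnefQ : ∀ i, 0 ≤ M.mulVec (L - Nq) i := by
    intro i
    have h1 : ((M.mulVec (L - Nq) i : ℚ) : ℝ)
        = (M.map ((↑) : ℚ → ℝ)).mulVec (fun j => (((L - Nq) j : ℚ) : ℝ)) i :=
      (zar_cast_mulVec M (L - Nq) i).symm
    rw [hcast_sub] at h1
    have h2 := hnefA i
    rw [← h1] at h2
    exact_mod_cast h2
  have horthQ : (L - Nq) ⬝ᵥ M.mulVec Nq = 0 := by
    have h1 : (((L - Nq) ⬝ᵥ M.mulVec Nq : ℚ) : ℝ)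
        = (fun j => (((L - Nq) j : ℚ) : ℝ)) ⬝ᵥ
          (fun j => ((M.mulVec Nq j : ℚ) : ℝ)) := by
      rw [zar_cast_dot]
    have h2 : (fun j => ((M.mulVec Nq j : ℚ) : ℝ))
        = (M.map ((↑) : ℚ → ℝ)).mulVec (fun j => ((Nq j : ℝ))) := by
      funext j; exact (zar_cast_mulVec M Nq j).symm
    rw [h2, hcast_sub, hNc_eq] at h1
    have h3 : (l - N) ⬝ᵥ (M.map ((↑) : ℚ → ℝ)).mulVec N = 0 := by
      rw [zar_dot_symm hA_symm]
      show (∑ i, N i * (M.map ((↑) : ℚ → ℝ)).mulVec (l - N) i) = 0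
      refine Finset.sum_eq_zero fun i _ => ?_
      rcases eq_or_ne (N i) 0 with h | h
      · rw [h, zero_mul]
      · rw [hcomplA i h, mul_zero]
    rw [h3] at h1
    exact_mod_cast h1
  refine ⟨⟨L - Nq, Nq⟩, ⟨by simp, hnefQ, hNq_nn, horthQ⟩, ?_⟩
  rintro ⟨P₂, N₂⟩ ⟨h1, h2, h3, h4⟩
  have hN2 : N₂ = Nq :=
    huniq P₂ N₂ (L - Nq) Nq h1 h2 h3 h4 (by simp) hnefQ hNq_nn horthQ
  have hP2 : P₂ = L - Nq := by
    rw [← hN2]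
    funext i
    have := congrFun h1 i
    simp only [Pi.add_apply] at this
    simp [Pi.sub_apply, this]
  simp [Prod.ext_iff, hP2, hN2]
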